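/- arXiv:2404.10687 — 7 statements merged into one kernel-verified Lean document; each statement's English description precedes it below -/
import Mathlib

section
/- Let H be a real m×n matrix and L a real n×l matrix with linearly independent columns, and set P = L Lᵀ. Let B be the Moore–Penrose pseudoinverse of H L (i.e., B is the l×m matrix satisfying (HL)B(HL) = HL, B(HL)B = B, ((HL)B)ᵀ = (HL)B, and (B(HL))ᵀ = B(HL)). Then, for every δ > 0 the matrix H P Hᵀ + δ·I_m is invertible, and the matrix-valued function δ ↦ P Hᵀ (H P Hᵀ + δ·I_m)⁻¹ tends to L B as δ tends to 0 from the right. -/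
open Matrix

private lemma kalman_aux_unit {m l : ℕ} (A : Matrix (Fin m) (Fin l) ℝ)
    (δ : ℝ) (hδ : 0 < δ) :
    IsUnit (A * Aᵀ + δ • (1 : Matrix (Fin m) (Fin m) ℝ)) := by
  have hpsd : (A * Aᵀ).PosSemidef := by
    have := Matrix.posSemidef_self_mul_conjTranspose A
    rwa [conjTranspose_eq_transpose_of_trivial] at this
  have hpd : (δ • (1 : Matrix (Fin m) (Fin m) ℝ)).PosDef := by
    rw [smul_one_eq_diagonal]
    exact Matrix.PosDef.diagonal fun _ => hδ
  exact (Matrix.PosDef.posSemidef_add hpsd hpd).isUnit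

private lemma kalman_aux_sone {l : ℕ} (δ : ℝ) (hδ : 0 < δ) :
    (δ • (1 : Matrix (Fin l) (Fin l) ℝ)).PosDef := by
  rw [smul_one_eq_diagonal]
  exact Matrix.PosDef.diagonal fun _ => hδ

private lemma kalman_aux_key {m l : ℕ} (A : Matrix (Fin m) (Fin l) ℝ)
    (B : Matrix (Fin l) (Fin m) ℝ)
    (hB1 : A * B * A = A) (hB2 : B * A * B = B)
    (hB3 : (A * B)ᵀ = A * B) (hB4 : (B * A)ᵀ = B * A)
    (δ : ℝ) (hδ : 0 < δ) :
    Aᵀ * (A * Aᵀ + δ • (1 : Matrix (Fin m) (Fin m) ℝ))⁻¹ =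
      B - δ • ((1 + δ • (B * Bᵀ))⁻¹ * (B * (Bᵀ * B))) := by
  have hAt : B * (A * Aᵀ) = Aᵀ := by
    calc B * (A * Aᵀ) = (B * A) * Aᵀ := by rw [Matrix.mul_assoc]
    _ = (B * A)ᵀ * Aᵀ := by rw [hB4]
    _ = (A * (B * A))ᵀ := (transpose_mul A (B * A)).symm
    _ = (A * B * A)ᵀ := by rw [Matrix.mul_assoc]
    _ = Aᵀ := by rw [hB1]
  have hBB : B * (Bᵀ * Aᵀ) = B := by
    calc B * (Bᵀ * Aᵀ) = B * (A * B)ᵀ := by rw [transpose_mul]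
    _ = B * (A * B) := by rw [hB3]
    _ = B * A * B := by rw [Matrix.mul_assoc]
    _ = B := hB2
  set M : Matrix (Fin m) (Fin m) ℝ := A * Aᵀ + δ • 1 with hM
  have hMu : IsUnit M := kalman_aux_unit A δ hδ
  have hMinv : M * M⁻¹ = 1 := Matrix.mul_nonsing_inv _ ((isUnit_iff_isUnit_det M).mp hMu)
  have hBBt : (δ • (B * Bᵀ)).PosSemidef := by
    have h1 : (B * (δ • (1 : Matrix (Fin m) (Fin m) ℝ)) * Bᴴ).PosSemidef :=
      ((kalman_aux_sone δ hδ).posSemidef).mul_mul_conjTranspose_same B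
    have h2 : B * (δ • (1 : Matrix (Fin m) (Fin m) ℝ)) * Bᴴ = δ • (B * Bᵀ) := by
      rw [conjTranspose_eq_transpose_of_trivial, Matrix.mul_smul, Matrix.mul_one,
        Matrix.smul_mul]
    rwa [h2] at h1
  have hNpd : ((1 : Matrix (Fin l) (Fin l) ℝ) + δ • (B * Bᵀ)).PosDef :=
    Matrix.PosDef.add_posSemidef Matrix.PosDef.one hBBt
  set N : Matrix (Fin l) (Fin l) ℝ := 1 + δ • (B * Bᵀ) with hN
  have hNinv : N⁻¹ * N = 1 :=
    Matrix.nonsing_inv_mul _ ((isUnit_iff_isUnit_det N).mp hNpd.isUnit)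
  have eq1 : Aᵀ * M⁻¹ = B - δ • (B * M⁻¹) := by
    have h1 : Aᵀ * M⁻¹ = B * ((A * Aᵀ) * M⁻¹) := by
      rw [← Matrix.mul_assoc, hAt]
    have hAAt : A * Aᵀ = M - δ • 1 := by rw [hM, add_sub_cancel_right]
    rw [h1, hAAt, Matrix.sub_mul, hMinv, Matrix.smul_mul, Matrix.one_mul, Matrix.mul_sub,
      Matrix.mul_one, Matrix.mul_smul]
  have eq2 : N * (B * M⁻¹) = B * (Bᵀ * B) := by
    have h1 : B * M⁻¹ = B * (Bᵀ * (Aᵀ * M⁻¹)) := by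
      rw [← Matrix.mul_assoc Bᵀ, ← Matrix.mul_assoc, hBB]
    rw [hN, Matrix.add_mul, Matrix.one_mul, Matrix.smul_mul]
    nth_rewrite 1 [h1]
    rw [eq1, Matrix.mul_sub, Matrix.mul_sub, Matrix.mul_smul, Matrix.mul_smul,
      ← Matrix.mul_assoc B Bᵀ B, ← Matrix.mul_assoc B Bᵀ (B * M⁻¹), Matrix.mul_assoc]
    abel
  have eq3 : B * M⁻¹ = N⁻¹ * (B * (Bᵀ * B)) := by
    rw [← eq2, ← Matrix.mul_assoc, hNinv, Matrix.one_mul]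
  rw [eq1, eq3]

/-- **Theorem 1 (noise-free Kalman gain limit).**
Let `H` be a real `m × n` matrix and `L` a real `n × l` matrix with linearly independent
columns, and set `P = L * Lᵀ`.  Let `B` be the Moore–Penrose pseudoinverse of `H * L`.
Then for every `δ > 0` the matrix `H * P * Hᵀ + δ • 1` is invertible, and
`P * Hᵀ * (H * P * Hᵀ + δ • 1)⁻¹` tends to `L * B` as `δ → 0⁺`. -/
theorem kalman_gain_noise_free_limit
    {m n l : ℕ}
    (H : Matrix (Fin m) (Fin n) ℝ) (L : Matrix (Fin n) (Fin l) ℝ)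
    (hL : LinearIndependent ℝ Lᵀ)
    (P : Matrix (Fin n) (Fin n) ℝ) (hP : P = L * Lᵀ)
    (B : Matrix (Fin l) (Fin m) ℝ)
    (hB1 : (H * L) * B * (H * L) = H * L)
    (hB2 : B * (H * L) * B = B)
    (hB3 : ((H * L) * B)ᵀ = (H * L) * B)
    (hB4 : (B * (H * L))ᵀ = B * (H * L)) :
    (∀ δ : ℝ, 0 < δ →
      IsUnit (H * P * Hᵀ + δ • (1 : Matrix (Fin m) (Fin m) ℝ))) ∧
    Filter.Tendsto
      (fun δ : ℝ => P * Hᵀ * (H * P * Hᵀ + δ • (1 : Matrix (Fin m) (Fin m) ℝ))⁻¹)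
      (nhdsWithin 0 (Set.Ioi 0)) (nhds (L * B)) := by
  subst hP
  have hPH : H * (L * Lᵀ) * Hᵀ = (H * L) * (H * L)ᵀ := by
    rw [transpose_mul]
    simp only [Matrix.mul_assoc]
  refine ⟨fun δ hδ => by rw [hPH]; exact kalman_aux_unit (H * L) δ hδ, ?_⟩
  -- key pointwise identity for δ > 0
  have key : ∀ δ : ℝ, 0 < δ →
      L * Lᵀ * Hᵀ * (H * (L * Lᵀ) * Hᵀ + δ • (1 : Matrix (Fin m) (Fin m) ℝ))⁻¹ =
      L * B - δ • (L * ((1 + δ • (B * Bᵀ))⁻¹ * (B * (Bᵀ * B)))) := by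
    intro δ hδ
    have hLHS : L * Lᵀ * Hᵀ * (H * (L * Lᵀ) * Hᵀ + δ • (1 : Matrix (Fin m) (Fin m) ℝ))⁻¹ =
        L * ((H * L)ᵀ * ((H * L) * (H * L)ᵀ + δ • (1 : Matrix (Fin m) (Fin m) ℝ))⁻¹) := by
      rw [hPH, transpose_mul]
      simp only [Matrix.mul_assoc]
    rw [hLHS, kalman_aux_key (H * L) B hB1 hB2 hB3 hB4 δ hδ, Matrix.mul_sub, Matrix.mul_smul]
  have hcont : Filter.Tendsto
      (fun δ : ℝ => L * B - δ • (L * ((1 + δ • (B * Bᵀ))⁻¹ * (B * (Bᵀ * B)))))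
      (nhdsWithin 0 (Set.Ioi 0)) (nhds (L * B)) := by
    have h1 : Continuous (fun δ : ℝ => 1 + δ • (B * Bᵀ)) := by continuity
    have h2 : ContinuousAt Inv.inv
        ((1 : Matrix (Fin l) (Fin l) ℝ) + (0 : ℝ) • (B * Bᵀ)) := by
      apply continuousAt_matrix_inv
      have hdet : ((1 : Matrix (Fin l) (Fin l) ℝ) + (0 : ℝ) • (B * Bᵀ)).det = 1 := by simp
      rw [hdet, Ring.inverse_eq_inv']
      exact continuousAt_inv₀ one_ne_zero
    have hinv : ContinuousAt (fun δ : ℝ => (1 + δ • (B * Bᵀ))⁻¹) 0 := by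
      have := h2.tendsto.comp h1.continuousAt
      simpa [ContinuousAt, Function.comp_def] using this
    have hmulc : Continuous (fun X : Matrix (Fin l) (Fin l) ℝ => L * (X * (B * (Bᵀ * B)))) :=
      continuous_const.matrix_mul (continuous_id.matrix_mul continuous_const)
    have hfun : ContinuousAt
        (fun δ : ℝ => L * B - δ • (L * ((1 + δ • (B * Bᵀ))⁻¹ * (B * (Bᵀ * B))))) 0 :=
      continuousAt_const.sub (continuousAt_id.smul (hmulc.continuousAt.comp hinv))
    have h0 : L * B - (0 : ℝ) • (L * ((1 + (0 : ℝ) • (B * Bᵀ))⁻¹ * (B * (Bᵀ * B)))) = L * B := by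
      simp
    have := hfun.tendsto
    rw [h0] at this
    exact this.mono_left nhdsWithin_le_nhds
  refine hcont.congr' ?_
  filter_upwards [self_mem_nhdsWithin] with δ hδ
  exact (key δ hδ).symm
end

section
/- Let A be a real m×l matrix and let B be its Moore–Penrose pseudoinverse (i.e., B is the l×m matrix with A B A = A, B A B = B, (A B)ᵀ = A B, (B A)ᵀ = B A). Then for every δ > 0 the matrix A Aᵀ + δ·I_m is invertible, and Aᵀ (A Aᵀ + δ·I_m)⁻¹ tends to B as δ tends to 0 from the right. -/
open Matrix Filter

private lemma smul_posSemidef' {n : ℕ} {M : Matrix (Fin n) (Fin n) ℝ}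
    (hM : M.PosSemidef) {a : ℝ} (ha : 0 ≤ a) : (a • M).PosSemidef := by
  refine ⟨?_, fun x => ?_⟩
  · rw [IsHermitian, conjTranspose_smul, hM.1.eq, star_trivial]
  · convert mul_nonneg ha (hM.2 x) using 1
    simp only [Finsupp.sum, Finset.mul_sum, Matrix.smul_apply, smul_eq_mul, star_trivial]
    exact Finset.sum_congr rfl fun i _ => Finset.sum_congr rfl fun j _ => by ring

/-- Let `A` be a real `m × l` matrix and `B` its Moore–Penrose pseudoinverse.
Then for every `δ > 0` the matrix `A * Aᵀ + δ • 1` is invertible, and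
`Aᵀ * (A * Aᵀ + δ • 1)⁻¹` tends to `B` as `δ → 0⁺`. -/
theorem pseudoinverse_limit
    {m l : ℕ}
    (A : Matrix (Fin m) (Fin l) ℝ) (B : Matrix (Fin l) (Fin m) ℝ)
    (hB1 : A * B * A = A)
    (hB2 : B * A * B = B)
    (hB3 : (A * B)ᵀ = A * B)
    (hB4 : (B * A)ᵀ = B * A) :
    (∀ δ : ℝ, 0 < δ →
      IsUnit (A * Aᵀ + δ • (1 : Matrix (Fin m) (Fin m) ℝ))) ∧
    Filter.Tendsto
      (fun δ : ℝ => Aᵀ * (A * Aᵀ + δ • (1 : Matrix (Fin m) (Fin m) ℝ))⁻¹)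
      (nhdsWithin 0 (Set.Ioi 0)) (nhds B) := by
  have hAAt : (A * Aᵀ).PosSemidef := by
    have := posSemidef_self_mul_conjTranspose A
    rwa [conjTranspose_eq_transpose_of_trivial] at this
  have hBBt : (B * Bᵀ).PosSemidef := by
    have := posSemidef_self_mul_conjTranspose B
    rwa [conjTranspose_eq_transpose_of_trivial] at this
  have hNunit : ∀ δ : ℝ, 0 < δ →
      IsUnit (A * Aᵀ + δ • (1 : Matrix (Fin m) (Fin m) ℝ)) := by
    intro δ hδ
    refine (Matrix.PosDef.posSemidef_add hAAt ?_).isUnit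
    rw [smul_one_eq_diagonal]
    exact Matrix.PosDef.diagonal fun _ => hδ
  refine ⟨hNunit, ?_⟩
  have hPposdef : ∀ δ : ℝ, 0 ≤ δ →
      ((1 : Matrix (Fin l) (Fin l) ℝ) + δ • (B * Bᵀ)).PosDef :=
    fun δ hδ => Matrix.PosDef.one.add_posSemidef (smul_posSemidef' hBBt hδ)
  have hBM : B * (A * Aᵀ) = Aᵀ := by
    rw [← Matrix.mul_assoc, ← hB4, ← transpose_mul, ← Matrix.mul_assoc, hB1]
  have hBB : B * Bᵀ * Aᵀ = B := by
    rw [Matrix.mul_assoc, ← transpose_mul, hB3, ← Matrix.mul_assoc, hB2]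
  set f : ℝ → Matrix (Fin l) (Fin m) ℝ :=
    fun δ => B - δ • (((1 : Matrix (Fin l) (Fin l) ℝ) + δ • (B * Bᵀ))⁻¹ * (B * Bᵀ * B))
    with hf
  have hkey : ∀ δ : ℝ, 0 < δ →
      Aᵀ * (A * Aᵀ + δ • (1 : Matrix (Fin m) (Fin m) ℝ))⁻¹ = f δ := by
    intro δ hδ
    set N := A * Aᵀ + δ • (1 : Matrix (Fin m) (Fin m) ℝ) with hN
    set P := (1 : Matrix (Fin l) (Fin l) ℝ) + δ • (B * Bᵀ) with hP
    have hNd : IsUnit N.det := (Matrix.isUnit_iff_isUnit_det N).mp (hNunit δ hδ)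
    have hPd : IsUnit P.det := (Matrix.isUnit_iff_isUnit_det P).mp (hPposdef δ hδ.le).isUnit
    have hNN : N * N⁻¹ = 1 := Matrix.mul_nonsing_inv N hNd
    have h1 : Aᵀ = B * N - δ • B := by
      rw [hN, Matrix.mul_add, hBM, Matrix.mul_smul, Matrix.mul_one, add_sub_cancel_right]
    have h2 : Aᵀ * N⁻¹ = B - δ • (B * N⁻¹) := by
      rw [h1, Matrix.sub_mul, Matrix.mul_assoc, hNN, Matrix.mul_one, Matrix.smul_mul]
    have hX : B * N⁻¹ = B * Bᵀ * B - δ • (B * Bᵀ * (B * N⁻¹)) := by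
      calc B * N⁻¹ = B * Bᵀ * Aᵀ * N⁻¹ := by rw [hBB]
        _ = B * Bᵀ * (Aᵀ * N⁻¹) := by rw [Matrix.mul_assoc]
        _ = B * Bᵀ * (B - δ • (B * N⁻¹)) := by rw [h2]
        _ = B * Bᵀ * B - δ • (B * Bᵀ * (B * N⁻¹)) := by rw [Matrix.mul_sub, Matrix.mul_smul]
    have h3 : P * (B * N⁻¹) = B * Bᵀ * B := by
      rw [hP, Matrix.add_mul, Matrix.one_mul, Matrix.smul_mul]
      
      nth_rewrite 1 [hX]
      rw [sub_add_cancel]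
    have h4 : B * N⁻¹ = P⁻¹ * (B * Bᵀ * B) := by
      rw [← h3, ← Matrix.mul_assoc, Matrix.nonsing_inv_mul P hPd, Matrix.one_mul]
    rw [h2, h4, hf]
  -- continuity of f at 0
  have hg : Continuous fun δ : ℝ =>
      (1 : Matrix (Fin l) (Fin l) ℝ) + δ • (B * Bᵀ) :=
    continuous_const.add (continuous_id.smul continuous_const)
  have hinvc : ContinuousAt
      (fun δ : ℝ => ((1 : Matrix (Fin l) (Fin l) ℝ) + δ • (B * Bᵀ))⁻¹) 0 := by
    refine ContinuousAt.comp ?_ hg.continuousAt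
    have h1 : (1 : Matrix (Fin l) (Fin l) ℝ) + (0 : ℝ) • (B * Bᵀ) = 1 := by simp
    rw [h1]
    refine continuousAt_matrix_inv _ ?_
    rw [det_one, Ring.inverse_eq_inv']
    exact continuousAt_inv₀ one_ne_zero
  have hmulC : Continuous (fun M : Matrix (Fin l) (Fin l) ℝ => M * (B * Bᵀ * B)) :=
    continuous_id.matrix_mul continuous_const
  have hcont : ContinuousAt f 0 :=
    continuousAt_const.sub (continuousAt_id.smul (hmulC.continuousAt.comp hinvc))
  have hlim : Tendsto f (nhdsWithin 0 (Set.Ioi 0)) (nhds B) := by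
    have h0 : f 0 = B := by simp [hf]
    have h := hcont.continuousWithinAt (s := Set.Ioi 0)
    rw [ContinuousWithinAt, h0] at h
    exact h
  refine hlim.congr' ?_
  filter_upwards [self_mem_nhdsWithin] with δ hδ
  exact (hkey δ hδ).symm
end

section
/- Let H be a real m×n matrix and L a real n×l matrix with linearly independent columns, set P = L Lᵀ, and let B be the Moore–Penrose pseudoinverse of H L. If H P Hᵀ is invertible, then the limit gain coincides with the standard noise-free Kalman gain: L B = P Hᵀ (H P Hᵀ)⁻¹. -/
open Matrix

/-- If `H * P * Hᵀ` is invertible (with `P = L * Lᵀ`, `L` having linearly independent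
columns, and `B` the Moore–Penrose pseudoinverse of `H * L`), then the limit gain `L * B`
coincides with the standard noise-free Kalman gain `P * Hᵀ * (H * P * Hᵀ)⁻¹`. -/
theorem limit_gain_eq_noise_free_kalman_gain
    {m n l : ℕ}
    (H : Matrix (Fin m) (Fin n) ℝ) (L : Matrix (Fin n) (Fin l) ℝ)
    (hL : LinearIndependent ℝ Lᵀ)
    (P : Matrix (Fin n) (Fin n) ℝ) (hP : P = L * Lᵀ)
    (B : Matrix (Fin l) (Fin m) ℝ)
    (hB1 : (H * L) * B * (H * L) = H * L)
    (hB2 : B * (H * L) * B = B)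
    (hB3 : ((H * L) * B)ᵀ = (H * L) * B)
    (hB4 : (B * (H * L))ᵀ = B * (H * L))
    (hS : IsUnit (H * P * Hᵀ)) :
    L * B = P * Hᵀ * (H * P * Hᵀ)⁻¹ := by
  set A := H * L with hA
  set S := H * P * Hᵀ with hSdef
  have hSA : S = A * Aᵀ := by
    rw [hSdef, hP, hA, Matrix.transpose_mul, Matrix.mul_assoc, Matrix.mul_assoc,
      Matrix.mul_assoc]
  have hdet : IsUnit S.det := (Matrix.isUnit_iff_isUnit_det S).mp hS
  have hAC : A * (Aᵀ * S⁻¹) = 1 := by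
    rw [← Matrix.mul_assoc, ← hSA, Matrix.mul_nonsing_inv S hdet]
  have hAB : A * B = 1 := by
    have h1 : (A * B * A) * (Aᵀ * S⁻¹) = A * (Aᵀ * S⁻¹) := by rw [hB1]
    rw [hAC] at h1
    rw [Matrix.mul_assoc, hAC, Matrix.mul_one] at h1
    exact h1
  have hSsymm : Sᵀ = S := by
    rw [hSA, Matrix.transpose_mul, Matrix.transpose_transpose]
  have hB : B = Aᵀ * S⁻¹ := by
    calc B = B * (A * (Aᵀ * S⁻¹)) := by rw [hAC, Matrix.mul_one]
    _ = (B * A) * (Aᵀ * S⁻¹) := by simp only [Matrix.mul_assoc]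
    _ = (B * A)ᵀ * (Aᵀ * S⁻¹) := by rw [hB4]
    _ = Aᵀ * (Bᵀ * Aᵀ) * S⁻¹ := by
        rw [Matrix.transpose_mul]; simp only [Matrix.mul_assoc]
    _ = Aᵀ * (A * B)ᵀ * S⁻¹ := by rw [Matrix.transpose_mul A B]
    _ = Aᵀ * S⁻¹ := by rw [hAB, Matrix.transpose_one, Matrix.mul_one]
  rw [hB, ← Matrix.mul_assoc, hA, Matrix.transpose_mul, ← Matrix.mul_assoc, hP,
    Matrix.mul_assoc L Lᵀ Hᵀ]
end

section
/- Fix r ∈ ℝ³, α, β ∈ ℝ, and set d = (r, α, β) ∈ ℝ⁵ and H = [−(r)ₓ, α·I₃, β·I₃] ∈ ℝ^{3×9}. Let χ ∈ ℝ^{5×5} be the block matrix [R v p; 0 1 0; 0 0 1] with R ∈ SO(3) and v, p ∈ ℝ³, and let y ∈ ℝ⁵ satisfy χ d = y. Let ζ = (φ, ν, ρ) ∈ ℝ⁹ and let ζ^ ∈ ℝ^{5×5} be the block matrix [(φ)ₓ ν ρ; 0 0 0; 0 0 0]. If H ζ = 0, then χ · exp(ζ^) satisfies (χ · exp(ζ^))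 d = y, where exp denotes the matrix exponential. -/
open Matrix

noncomputable section

/-- The 3×3 skew-symmetric matrix `(b)ₓ` with `(b)ₓ u = b × u`. -/
def skew (b : Fin 3 → ℝ) : Matrix (Fin 3) (Fin 3) ℝ :=
  !![0, -b 2, b 1; b 2, 0, -b 0; -b 1, b 0, 0]

/-- The vector `d = (r, α, β) ∈ ℝ⁵`. -/
def dVec (r : Fin 3 → ℝ) (α β : ℝ) : Fin 5 → ℝ := fun i =>
  if h : (i : ℕ) < 3 then r ⟨i, h⟩ else if (i : ℕ) = 3 then α else β

/-- The 5×5 extended-pose block matrix `[R v p; 0 1 0; 0 0 1]`. -/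
def se23 (R : Matrix (Fin 3) (Fin 3) ℝ) (v p : Fin 3 → ℝ) : Matrix (Fin 5) (Fin 5) ℝ :=
  Matrix.of fun i j =>
    if hi : (i : ℕ) < 3 then
      if hj : (j : ℕ) < 3 then R ⟨i, hi⟩ ⟨j, hj⟩
      else if (j : ℕ) = 3 then v ⟨i, hi⟩ else p ⟨i, hi⟩
    else if (i : ℕ) = (j : ℕ) then 1 else 0

/-- The 5×5 Lie-algebra block matrix `ζ^ = [(φ)ₓ ν ρ; 0 0 0; 0 0 0]`. -/
def se23hat (φ ν ρ : Fin 3 → ℝ) : Matrix (Fin 5) (Fin 5) ℝ :=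
  Matrix.of fun i j =>
    if hi : (i : ℕ) < 3 then
      if hj : (j : ℕ) < 3 then skew φ ⟨i, hi⟩ ⟨j, hj⟩
      else if (j : ℕ) = 3 then ν ⟨i, hi⟩ else ρ ⟨i, hi⟩
    else 0

/-- The measurement Jacobian `H = [−(r)ₓ, α·I₃, β·I₃] ∈ ℝ^{3×9}`. -/
def Hmat (r : Fin 3 → ℝ) (α β : ℝ) : Matrix (Fin 3) (Fin 9) ℝ :=
  Matrix.of fun i j =>
    if hj : (j : ℕ) < 3 then (-(skew r)) i ⟨j, hj⟩
    else if _ : (j : ℕ) < 6 then (if (i : ℕ) = (j : ℕ) - 3 then α else 0)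
    else (if (i : ℕ) = (j : ℕ) - 6 then β else 0)

/-- The vector `ζ = (φ, ν, ρ) ∈ ℝ⁹`. -/
def vec9 (φ ν ρ : Fin 3 → ℝ) : Fin 9 → ℝ := fun j =>
  if hj : (j : ℕ) < 3 then φ ⟨j, hj⟩
  else if hj6 : (j : ℕ) < 6 then ν ⟨(j : ℕ) - 3, by omega⟩
  else ρ ⟨(j : ℕ) - 6, by omega⟩

end


set_option maxHeartbeats 1000000 in
private lemma exp_mulVec_fix {n : ℕ} (A : Matrix (Fin n) (Fin n) ℝ) (d : Fin n → ℝ)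
    (h : A.mulVec d = 0) : (NormedSpace.exp A).mulVec d = d := by
  have hpow : ∀ k : ℕ, k ≠ 0 → (A ^ k).mulVec d = 0 := by
    intro k hk
    induction k with
    | zero => exact absurd rfl hk
    | succ m ih =>
      rw [pow_succ, ← Matrix.mulVec_mulVec, h, Matrix.mulVec_zero]
  letI : SeminormedRing (Matrix (Fin n) (Fin n) ℝ) := Matrix.linftyOpSemiNormedRing
  letI : NormedRing (Matrix (Fin n) (Fin n) ℝ) := Matrix.linftyOpNormedRing
  letI : NormedAlgebra ℝ (Matrix (Fin n) (Fin n) ℝ) := Matrix.linftyOpNormedAlgebra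
  set L : Matrix (Fin n) (Fin n) ℝ →ₗ[ℝ] (Fin n → ℝ) :=
    { toFun := fun M => M.mulVec d
      map_add' := fun M N => Matrix.add_mulVec M N d
      map_smul' := fun c M => by simp [Matrix.smul_mulVec] }
  have hL : (NormedSpace.exp A).mulVec d = L.toContinuousLinearMap (NormedSpace.exp A) := rfl
  rw [hL, NormedSpace.exp_eq_tsum (𝕂 := ℝ),
    L.toContinuousLinearMap.map_tsum (NormedSpace.expSeries_summable' (𝕂 := ℝ) A)]
  rw [tsum_eq_single 0]
  · simp [L, LinearMap.toContinuousLinearMap]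
  · intro k hk
    simp [L, LinearMap.toContinuousLinearMap, Matrix.mulVec_smul, hpow k hk]

set_option maxHeartbeats 1000000 in
private lemma hat_mulVec_zero (r : Fin 3 → ℝ) (α β : ℝ) (φ ν ρ : Fin 3 → ℝ)
    (hH : (Hmat r α β).mulVec (vec9 φ ν ρ) = 0) :
    (se23hat φ ν ρ).mulVec (dVec r α β) = 0 := by
  have h0 := congrFun hH 0
  have h1 := congrFun hH 1
  have h2 := congrFun hH 2
  simp [Matrix.mulVec, dotProduct, Fin.sum_univ_succ, Hmat, vec9, skew] at h0 h1 h2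
  funext i
  fin_cases i <;>
    simp [Matrix.mulVec, dotProduct, Fin.sum_univ_succ, se23hat, dVec, skew,
      show ((3:Fin 5):ℕ)=3 from rfl, show ((4:Fin 5):ℕ)=4 from rfl] <;> linarith

/-- **Proposition 1.** If `χ ∈ SE₂(3)` satisfies the constraint `χ d = y` and the Lie-algebra
element `ζ = (φ, ν, ρ)` satisfies `H ζ = 0`, then `χ · exp(ζ^)` also satisfies the
constraint: `(χ · exp(ζ^)) d = y`. -/
theorem constraint_preserved_by_kernel_directions
    (r : Fin 3 → ℝ) (α β : ℝ)
    (R : Matrix (Fin 3) (Fin 3) ℝ) (hR : Rᵀ * R = 1) (hdet : R.det = 1)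
    (v p : Fin 3 → ℝ) (y : Fin 5 → ℝ)
    (hy : (se23 R v p).mulVec (dVec r α β) = y)
    (φ ν ρ : Fin 3 → ℝ)
    (hH : (Hmat r α β).mulVec (vec9 φ ν ρ) = 0) :
    (se23 R v p * NormedSpace.exp (se23hat φ ν ρ)).mulVec (dVec r α β) = y := by
  rw [← Matrix.mulVec_mulVec, exp_mulVec_fix _ _ (hat_mulVec_zero r α β φ ν ρ hH), hy]
end

section
/- Fix r ∈ ℝ³, α, β ∈ ℝ, set d = (r, α, β) ∈ ℝ⁵ and H = [−(r)ₓ, α·I₃, β·I₃] ∈ ℝ^{3×9}. Let χ̂ ∈ ℝ^{5×5} be the block matrix [R̂ v̂ p̂; 0 1 0; 0 0 1] with R̂ ∈ SO(3) and v̂, p̂ ∈ ℝ³, and let y ∈ ℝ⁵ satisfy χ̂ d = y. Let P be a real 9×9 matrix with H P = 0. Then for every ξ in the column space of P (i.e., ξ = P w for some w ∈ ℝ⁹), one has (χ̂ · exp(ξ^)) d = y, where ξ^ ∈ ℝ^{5×5} is the block matrix [(φ)ₓ ν ρ; 0 0 0; 0 0 0] for ξ = (φ, ν, ρ). -/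
open Matrix

/-- The 5×5 Lie-algebra matrix `ξ^` associated to `ξ = (φ, ν, ρ) ∈ ℝ⁹`. -/
noncomputable def hat9 (ξ : Fin 9 → ℝ) : Matrix (Fin 5) (Fin 5) ℝ :=
  se23hat (fun i => ξ ⟨(i : ℕ), by have := i.isLt; omega⟩)
    (fun i => ξ ⟨(i : ℕ) + 3, by have := i.isLt; omega⟩)
    (fun i => ξ ⟨(i : ℕ) + 6, by have := i.isLt; omega⟩)


open Matrix in
lemma exp_mulVec_fixed (A : Matrix (Fin 5) (Fin 5) ℝ) (d : Fin 5 → ℝ)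
    (h : A.mulVec d = 0) : (NormedSpace.exp A).mulVec d = d := by
  letI : SeminormedRing (Matrix (Fin 5) (Fin 5) ℝ) := Matrix.linftyOpSemiNormedRing
  letI : NormedRing (Matrix (Fin 5) (Fin 5) ℝ) := Matrix.linftyOpNormedRing
  letI : NormedAlgebra ℝ (Matrix (Fin 5) (Fin 5) ℝ) := Matrix.linftyOpNormedAlgebra
  have hpow : ∀ n : ℕ, (A ^ (n+1)).mulVec d = 0 := fun n => by
    rw [pow_succ, ← Matrix.mulVec_mulVec, h, Matrix.mulVec_zero]
  let L : Matrix (Fin 5) (Fin 5) ℝ →ₗ[ℝ] (Fin 5 → ℝ) :=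
    { toFun := fun M => M.mulVec d
      map_add' := fun M N => Matrix.add_mulVec M N d
      map_smul' := fun c M => Matrix.smul_mulVec c M d }
  have hL : Continuous L := L.continuous_of_finiteDimensional
  have hs : Summable (fun n : ℕ => ((n.factorial : ℝ))⁻¹ • A ^ n) :=
    NormedSpace.expSeries_summable' A
  have key : (NormedSpace.exp A).mulVec d
      = ∑' n : ℕ, ((n.factorial : ℝ))⁻¹ • (A ^ n).mulVec d := by
    rw [NormedSpace.exp_eq_tsum (𝕂 := ℝ)]
    have := hs.hasSum.mapL ⟨L, hL⟩
    simpa [L, Matrix.smul_mulVec] using this.tsum_eq.symm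
  rw [key, tsum_eq_single 0]
  · simp [Matrix.one_mulVec]
  · intro n hn
    obtain ⟨m, rfl⟩ := Nat.exists_eq_succ_of_ne_zero hn
    simp [hpow]

open Matrix in
lemma sum_univ_nine' (f : Fin 9 → ℝ) :
    ∑ i, f i = f 0 + f 1 + f 2 + f 3 + f 4 + f 5 + f 6 + f 7 + f 8 := by
  rw [Fin.sum_univ_castSucc, Fin.sum_univ_eight]; rfl

open Matrix in
lemma hat9_mulVec_d (r : Fin 3 → ℝ) (α β : ℝ) (ξ : Fin 9 → ℝ)
    (h : (Hmat r α β).mulVec ξ = 0) : (hat9 ξ).mulVec (dVec r α β) = 0 := by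
  have h0 := congrFun h 0
  have h1 := congrFun h 1
  have h2 := congrFun h 2
  simp only [Matrix.mulVec, dotProduct, sum_univ_nine',
    Hmat, Matrix.of_apply, Pi.zero_apply, skew, Matrix.neg_apply,
    show ((3:Fin 9):ℕ) = 3 from rfl, show ((4:Fin 9):ℕ) = 4 from rfl,
    show ((5:Fin 9):ℕ) = 5 from rfl, show ((6:Fin 9):ℕ) = 6 from rfl,
    show ((7:Fin 9):ℕ) = 7 from rfl, show ((8:Fin 9):ℕ) = 8 from rfl] at h0 h1 h2
  norm_num at h0 h1 h2
  simp [Matrix.cons_val_two, Matrix.vecHead, Matrix.vecTail] at h2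
  funext i
  fin_cases i <;>
    · simp [Matrix.mulVec, dotProduct, Fin.sum_univ_five, hat9, se23hat, skew, dVec,
        show ((3:Fin 5):ℕ) = 3 from rfl, show ((4:Fin 5):ℕ) = 4 from rfl]
      try linarith

/-- **Theorem 3.** If the estimate `χ̂` satisfies the noise-free constraint `χ̂ d = y` and the
updated covariance `P` satisfies `H P = 0`, then the whole belief lies in the constraint
set: for every `ξ` in the column space of `P`, `(χ̂ · exp(ξ^)) d = y`. -/
theorem belief_lies_in_constraint_set
    (r : Fin 3 → ℝ) (α β : ℝ)
    (Rh : Matrix (Fin 3) (Fin 3) ℝ) (hR : Rhᵀ * Rh = 1) (hdet : Rh.det = 1)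
    (vh ph : Fin 3 → ℝ) (y : Fin 5 → ℝ)
    (hy : (se23 Rh vh ph).mulVec (dVec r α β) = y)
    (P : Matrix (Fin 9) (Fin 9) ℝ) (hHP : Hmat r α β * P = 0)
    (ξ : Fin 9 → ℝ) (w : Fin 9 → ℝ) (hξ : ξ = P.mulVec w) :
    (se23 Rh vh ph * NormedSpace.exp (hat9 ξ)).mulVec (dVec r α β) = y := by
  
  have hHxi : (Hmat r α β).mulVec ξ = 0 := by
    rw [hξ, Matrix.mulVec_mulVec, hHP, Matrix.zero_mulVec]
  rw [← Matrix.mulVec_mulVec, exp_mulVec_fixed _ _ (hat9_mulVec_d r α β ξ hHxi), hy]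
end

section
/- Fix ω, a, g ∈ ℝ³ and dt ∈ ℝ, and set Ω = exp(dt·(ω)ₓ) ∈ SO(3). Define the propagation map Φ on triples (R, v, p) with R ∈ SO(3) and v, p ∈ ℝ³ by Φ(R, v, p) = (R Ω, v + (R a + g)·dt, p + v·dt). Equip such triples with the SE₂(3) group product (R₁, v₁, p₁)·(R₂, v₂, p₂) = (R₁ R₂, R₁ v₂ + v₁, R₁ p₂ + p₁), whose identity is e = (I₃, 0, 0). Then Φ is group affine: for all χ₁, χ₂, Φ(χ₁ · χ₂) = Φ(χ₁) · Φ(e)⁻¹ · Φ(χ₂), where the inverse is taken in the group (the inverse of (R, v, p) is (Rᵀ, −Rᵀv, −Rᵀp)). -/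
open Matrix

noncomputable section

/-- Elements of `SE₂(3)` as triples `(R, v, p)`. -/
abbrev SE23T := Matrix (Fin 3) (Fin 3) ℝ × (Fin 3 → ℝ) × (Fin 3 → ℝ)

/-- The `SE₂(3)` group product
`(R₁, v₁, p₁) · (R₂, v₂, p₂) = (R₁ R₂, R₁ v₂ + v₁, R₁ p₂ + p₁)`. -/
def se23mul (x y : SE23T) : SE23T :=
  (x.1 * y.1, x.1.mulVec y.2.1 + x.2.1, x.1.mulVec y.2.2 + x.2.2)

/-- The `SE₂(3)` group inverse `(R, v, p)⁻¹ = (Rᵀ, −Rᵀ v, −Rᵀ p)`. -/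
def se23inv (x : SE23T) : SE23T :=
  (x.1ᵀ, -(x.1ᵀ.mulVec x.2.1), -(x.1ᵀ.mulVec x.2.2))

/-- The noise-free discrete-time IMU propagation map
`Φ(R, v, p) = (R Ω, v + (R a + g) dt, p + v dt)` with `Ω = exp(dt (ω)ₓ)`. -/
def Phi (ω a g : Fin 3 → ℝ) (dt : ℝ) (x : SE23T) : SE23T :=
  (x.1 * NormedSpace.exp (dt • skew ω),
    x.2.1 + dt • (x.1.mulVec a + g),
    x.2.2 + dt • x.2.1)

end

lemma skew_transpose (b : Fin 3 → ℝ) : (skew b)ᵀ = -(skew b) := by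
  ext i j
  fin_cases i <;> fin_cases j <;> simp [skew]

lemma exp_skew_mul_transpose (ω : Fin 3 → ℝ) (dt : ℝ) :
    NormedSpace.exp (dt • skew ω) * (NormedSpace.exp (dt • skew ω))ᵀ = 1 := by
  rw [← Matrix.exp_transpose, transpose_smul, skew_transpose, smul_neg,
    ← Matrix.exp_add_of_commute (dt • skew ω) (-(dt • skew ω)) (Commute.neg_right (Commute.refl _)),
    add_neg_cancel, NormedSpace.exp_zero]

/-- **Group-affinity of the IMU dynamics.** For all extended poses `χ₁, χ₂ ∈ SE₂(3)`,
`Φ(χ₁ · χ₂) = Φ(χ₁) · Φ(e)⁻¹ · Φ(χ₂)`, where `e = (I₃, 0, 0)` is the group identity. -/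
theorem imu_dynamics_group_affine
    (ω a g : Fin 3 → ℝ) (dt : ℝ)
    (χ₁ χ₂ : SE23T)
    (h₁R : χ₁.1ᵀ * χ₁.1 = 1) (h₁det : χ₁.1.det = 1)
    (h₂R : χ₂.1ᵀ * χ₂.1 = 1) (h₂det : χ₂.1.det = 1) :
    Phi ω a g dt (se23mul χ₁ χ₂) =
      se23mul
        (se23mul (Phi ω a g dt χ₁)
          (se23inv (Phi ω a g dt ((1 : Matrix (Fin 3) (Fin 3) ℝ), 0, 0))))
        (Phi ω a g dt χ₂) := by
  set Ω := NormedSpace.exp (dt • skew ω) with hΩdef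
  have hΩ : Ω * Ωᵀ = 1 := exp_skew_mul_transpose ω dt
  have key : ∀ X : Matrix (Fin 3) (Fin 3) ℝ, Ω * (Ωᵀ * X) = X := fun X => by
    rw [← Matrix.mul_assoc, hΩ, Matrix.one_mul]
  have keyv : ∀ x : Fin 3 → ℝ, Ω.mulVec (Ωᵀ.mulVec x) = x := fun x => by
    rw [Matrix.mulVec_mulVec, hΩ, Matrix.one_mulVec]
  refine Prod.ext ?_ (Prod.ext ?_ ?_)
  · show χ₁.1 * χ₂.1 * Ω = χ₁.1 * Ω * (1 * Ω)ᵀ * (χ₂.1 * Ω)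
    rw [Matrix.one_mul, Matrix.mul_assoc (χ₁.1 * Ω), Matrix.mul_assoc χ₁.1 Ω,
      ← Matrix.mul_assoc Ω Ωᵀ, hΩ, Matrix.one_mul, ← Matrix.mul_assoc]
  · show (χ₁.1.mulVec χ₂.2.1 + χ₁.2.1) + dt • ((χ₁.1 * χ₂.1).mulVec a + g) = _
    simp only [se23mul, se23inv, Phi, ← hΩdef, Matrix.one_mul, Matrix.one_mulVec, Matrix.mulVec_neg,
      Matrix.mulVec_add, Matrix.mulVec_smul, Matrix.mulVec_mulVec, Matrix.mul_assoc,
      hΩ, Matrix.mul_one, zero_add, add_zero, smul_zero, smul_add, key, keyv,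
      Matrix.mulVec_zero, neg_zero]
    module
  · show (χ₁.1.mulVec χ₂.2.2 + χ₁.2.2) + dt • (χ₁.1.mulVec χ₂.2.1 + χ₁.2.1) = _
    simp only [se23mul, se23inv, Phi, ← hΩdef, Matrix.one_mul, Matrix.one_mulVec, Matrix.mulVec_neg,
      Matrix.mulVec_add, Matrix.mulVec_smul, Matrix.mulVec_mulVec, Matrix.mul_assoc,
      hΩ, Matrix.mul_one, zero_add, add_zero, smul_zero, smul_add, key, keyv,
      Matrix.mulVec_zero, neg_zero]
    module
end

section
/- Fix r ∈ ℝ³, α, β ∈ ℝ, set d = (r, α, β) ∈ ℝ⁵ and H = [−(r)ₓ, α·I₃, β·I₃] ∈ ℝ^{3×9}. Let χ ∈ ℝ^{5×5} be a block matrix [R v p; 0 1 0; 0 0 1] with R ∈ SO(3) and v, p ∈ ℝ³. Then the map F : ℝ⁹ → ℝ⁵ defined by F(ξ) = χ · exp(ξ^) · d is differentiable at ξ = 0, and its derivative at 0 is the linear map ξ ↦ χ · (H ξ, 0, 0), i.e., the vector of ℝ⁵ obtained by applying χ to the 5-vector whose first three components are H ξ and whose last two components are zero. Here ξ^ ∈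 ℝ^{5×5} denotes the block matrix [(φ)ₓ ν ρ; 0 0 0; 0 0 0] for ξ = (φ, ν, ρ) ∈ ℝ⁹. -/
open Matrix

/-- The inclusion `ℝ³ → ℝ⁵` onto the first three coordinates, as a `5 × 3` matrix. -/
def padMat : Matrix (Fin 5) (Fin 3) ℝ :=
  Matrix.of fun i j => if (i : ℕ) = (j : ℕ) then 1 else 0


attribute [local instance] Matrix.linftyOpNormedRing Matrix.linftyOpNormedAlgebra

lemma skew_add (a b : Fin 3 → ℝ) : skew (a + b) = skew a + skew b := by
  ext i j; fin_cases i <;> fin_cases j <;> simp [skew, Matrix.vecHead, Matrix.vecTail] <;> ring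

lemma skew_smul (c : ℝ) (a : Fin 3 → ℝ) : skew (c • a) = c • skew a := by
  ext i j; fin_cases i <;> fin_cases j <;> simp [skew, Matrix.vecHead, Matrix.vecTail]

lemma skew_zero' : skew (0 : Fin 3 → ℝ) = 0 := by
  ext i j; fin_cases i <;> fin_cases j <;> simp [skew, Matrix.vecHead, Matrix.vecTail]

lemma se23hat_add (φ1 ν1 ρ1 φ2 ν2 ρ2 : Fin 3 → ℝ) :
    se23hat (φ1 + φ2) (ν1 + ν2) (ρ1 + ρ2) = se23hat φ1 ν1 ρ1 + se23hat φ2 ν2 ρ2 := by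
  ext i j
  simp only [se23hat, Matrix.of_apply, Matrix.add_apply, skew_add, Pi.add_apply]
  split_ifs <;> simp

lemma se23hat_smul (c : ℝ) (φ ν ρ : Fin 3 → ℝ) :
    se23hat (c • φ) (c • ν) (c • ρ) = c • se23hat φ ν ρ := by
  ext i j
  simp only [se23hat, Matrix.of_apply, Matrix.smul_apply, skew_smul, Pi.smul_apply,
    smul_eq_mul]
  split_ifs <;> simp

lemma hat9_add (x y : Fin 9 → ℝ) : hat9 (x + y) = hat9 x + hat9 y := by
  unfold hat9; exact se23hat_add _ _ _ _ _ _

lemma hat9_smul (c : ℝ) (x : Fin 9 → ℝ) : hat9 (c • x) = c • hat9 x := by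
  unfold hat9; exact se23hat_smul _ _ _ _

lemma hat9_zero : hat9 (0 : Fin 9 → ℝ) = 0 := by
  unfold hat9
  ext i j
  simp only [se23hat, Matrix.of_apply, Pi.zero_apply, Matrix.zero_apply]
  split_ifs <;> simp [show skew (fun _ : Fin 3 => (0:ℝ)) = skew 0 from rfl, skew_zero']

lemma key_mulVec (r : Fin 3 → ℝ) (α β : ℝ) (ξ : Fin 9 → ℝ) :
    (hat9 ξ).mulVec (dVec r α β) = padMat.mulVec ((Hmat r α β).mulVec ξ) := by
  funext i
  simp only [Matrix.mulVec, dotProduct, Fin.sum_univ_five, Fin.sum_univ_three,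
    Fin.sum_univ_succ, Fin.sum_univ_zero, hat9, se23hat, skew, dVec, padMat, Hmat,
    Matrix.of_apply, Matrix.neg_apply, Matrix.cons_val', Matrix.cons_val_zero,
    Matrix.cons_val_one, Matrix.head_cons, Matrix.head_fin_const, Matrix.empty_val',
    Matrix.cons_val_fin_one]
  fin_cases i <;>
    norm_num [Matrix.cons_val, Matrix.vecHead, Matrix.vecTail, Fin.succ,
      show (⟨2, by omega⟩ : Fin 3) = 2 from rfl]
    <;> simp only [Matrix.cons_val_two, Matrix.vecHead, Matrix.vecTail, Function.comp_apply, Fin.succ_zero_eq_one, Fin.succ_one_eq_two, Matrix.cons_val_one, Matrix.cons_val_zero] <;> ring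

noncomputable def hat9L : (Fin 9 → ℝ) →ₗ[ℝ] Matrix (Fin 5) (Fin 5) ℝ where
  toFun := hat9
  map_add' := hat9_add
  map_smul' := hat9_smul

noncomputable def outL (χ : Matrix (Fin 5) (Fin 5) ℝ) (d : Fin 5 → ℝ) :
    Matrix (Fin 5) (Fin 5) ℝ →ₗ[ℝ] (Fin 5 → ℝ) where
  toFun := fun M => (χ * M).mulVec d
  map_add' := fun M N => by
    show (χ * (M + N)).mulVec d = (χ * M).mulVec d + (χ * N).mulVec d
    rw [mul_add, Matrix.add_mulVec]
  map_smul' := fun c M => by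
    show (χ * (c • M)).mulVec d = c • (χ * M).mulVec d
    rw [mul_smul_comm, Matrix.smul_mulVec]


/-- **`H` is the Jacobian of the left-invariant output.** The map
`F(ξ) = χ · exp(ξ^) · d` is differentiable at `ξ = 0` with derivative
`ξ ↦ χ · (H ξ, 0, 0)`, i.e. the linear map with matrix `χ * padMat * H`. -/
theorem output_jacobian_is_Hmat
    (r : Fin 3 → ℝ) (α β : ℝ)
    (R : Matrix (Fin 3) (Fin 3) ℝ) (hR : Rᵀ * R = 1) (hdet : R.det = 1)
    (v p : Fin 3 → ℝ) :
    HasFDerivAt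
      (fun ξ : Fin 9 → ℝ =>
        (se23 R v p * NormedSpace.exp (hat9 ξ)).mulVec (dVec r α β))
      (LinearMap.toContinuousLinearMap
        (Matrix.mulVecLin (se23 R v p * padMat * Hmat r α β)))
      0 := by
  set χ := se23 R v p with hχ
  set d := dVec r α β with hd
  have h1 : HasFDerivAt hat9 (LinearMap.toContinuousLinearMap hat9L) 0 :=
    (LinearMap.toContinuousLinearMap hat9L).hasFDerivAt
  have h2 : HasFDerivAt (NormedSpace.exp)
      (1 : Matrix (Fin 5) (Fin 5) ℝ →L[ℝ] Matrix (Fin 5) (Fin 5) ℝ) (hat9 0) := by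
    rw [hat9_zero]; exact hasFDerivAt_exp_zero
  have h3 : HasFDerivAt (fun M : Matrix (Fin 5) (Fin 5) ℝ => (χ * M).mulVec d)
      (LinearMap.toContinuousLinearMap (outL χ d)) (NormedSpace.exp (hat9 0)) :=
    (LinearMap.toContinuousLinearMap (outL χ d)).hasFDerivAt
  have h := h3.comp 0 (h2.comp 0 h1)
  refine h.congr_fderiv (Eq.symm ?_)
  refine ContinuousLinearMap.ext fun ξ => funext fun i => ?_
  simp only [ContinuousLinearMap.coe_comp', Function.comp_apply,
    LinearMap.coe_toContinuousLinearMap', ContinuousLinearMap.one_apply]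
  show (χ * padMat * Hmat r α β).mulVecLin ξ i = (outL χ d) (hat9L ξ) i
  have hkey : (outL χ d) (hat9L ξ) = (χ * padMat * Hmat r α β).mulVec ξ := by
    show (χ * hat9 ξ).mulVec d = _
    rw [← Matrix.mulVec_mulVec, key_mulVec, Matrix.mulVec_mulVec, Matrix.mulVec_mulVec]
  rw [hkey, Matrix.mulVecLin_apply]
end
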